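/- Let F(u) = u^m/m and G(v) = v^n/n with m, n ≥ 2, and h(u,v) = u^p v^q e^{−λ(u+v)} with λ > 0, p ≥ m, q ≥ n. Then there exists ε* > 0 such that the function (u,v) ↦ F(u) + G(v) + 2ε*·h(u,v) is convex on the closed positive quadrant [0,∞)². -/

import Mathlib

set_option maxHeartbeats 1000000

open Real


lemma aux_pow_exp_bound (a lam : ℝ) (ha : 0 ≤ a) (hlam : 0 < lam) :
    ∃ C : ℝ, 0 < C ∧ ∀ u : ℝ, 0 ≤ u → u ^ a * Real.exp (-lam * u) ≤ C := by
  set k := ⌈a⌉₊ with hk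
  refine ⟨1 + k.factorial / lam ^ k, by positivity, fun u hu => ?_⟩
  have h1 : u ^ a ≤ 1 + u ^ k := by
    rcases le_total u 1 with h | h
    · have := Real.rpow_le_one hu h ha
      have : (0:ℝ) ≤ u ^ k := by positivity
      nlinarith [Real.rpow_le_one hu ‹u ≤ 1› ha]
    · have h2 : u ^ a ≤ u ^ (k:ℝ) :=
        Real.rpow_le_rpow_of_exponent_le h (Nat.le_ceil a)
      rw [Real.rpow_natCast] at h2
      nlinarith
  have hek : (lam * u) ^ k / k.factorial ≤ Real.exp (lam * u) := by
    calc (lam * u) ^ k / k.factorial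
        ≤ ∑ i ∈ Finset.range (k+1), (lam*u) ^ i / i.factorial := by
          refine Finset.single_le_sum (f := fun i => (lam*u)^i / i.factorial) ?_ (Finset.self_mem_range_succ k)
          intro i _
          positivity
      _ ≤ Real.exp (lam * u) := Real.sum_le_exp_of_nonneg (by positivity) _
  have hpk : u ^ k * Real.exp (-lam * u) ≤ k.factorial / lam ^ k := by
    have hexp : Real.exp (-lam*u) * Real.exp (lam*u) = 1 := by
      rw [← Real.exp_add]; ring_nf; exact Real.exp_zero
    have hlk : (0:ℝ) < lam ^ k := by positivity
    have : u ^ k ≤ (k.factorial / lam ^ k) * Real.exp (lam * u) := by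
      rw [mul_pow] at hek
      have := (div_le_iff₀ (by positivity : (0:ℝ) < (k.factorial:ℝ))).mp hek
      calc (u:ℝ)^k = (lam^k * u^k) / lam^k := by field_simp
        _ ≤ (k.factorial * Real.exp (lam*u)) / lam^k := by
            exact (div_le_div_iff_of_pos_right hlk).mpr (by nlinarith [this])
        _ = (k.factorial / lam ^ k) * Real.exp (lam * u) := by ring
    calc u ^ k * Real.exp (-lam*u) ≤ ((k.factorial / lam ^ k) * Real.exp (lam * u)) * Real.exp (-lam*u) := by
          apply mul_le_mul_of_nonneg_right this (Real.exp_nonneg _)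
      _ = k.factorial / lam ^ k := by
          rw [mul_assoc, mul_comm (Real.exp (lam*u)), hexp, mul_one]
  have hexp1 : Real.exp (-lam*u) ≤ 1 := Real.exp_le_one_iff.mpr (by nlinarith)
  calc u ^ a * Real.exp (-lam*u) ≤ (1 + u ^ k) * Real.exp (-lam*u) := by
        apply mul_le_mul_of_nonneg_right h1 (Real.exp_nonneg _)
    _ = Real.exp (-lam*u) + u^k * Real.exp (-lam*u) := by ring
    _ ≤ 1 + k.factorial / lam ^ k := add_le_add hexp1 hpk

lemma aux_pow_exp_le_rpow (a g lam : ℝ) (hg : 0 ≤ g) (hag : g ≤ a) (hlam : 0 < lam) :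
    ∃ C : ℝ, 1 ≤ C ∧ ∀ u : ℝ, 0 ≤ u → u ^ a * Real.exp (-lam * u) ≤ C * u ^ g := by
  obtain ⟨C0, hC0, hC⟩ := aux_pow_exp_bound (a - g) lam (by linarith) hlam
  refine ⟨max C0 1, le_max_right _ _, fun u hu => ?_⟩
  rcases eq_or_lt_of_le hu with h | h
  · subst h
    rcases eq_or_lt_of_le hg with h0 | h0
    · rw [← h0, Real.rpow_zero, mul_one]
      calc (0:ℝ) ^ a * Real.exp (-lam * 0) ≤ 1 * 1 := by
            apply mul_le_mul (Real.zero_rpow_le_one a) ?_ (Real.exp_nonneg _) zero_le_one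
            rw [mul_zero, Real.exp_zero]
        _ ≤ max C0 1 := by simp
    · rw [Real.zero_rpow (by linarith : a ≠ 0), Real.zero_rpow (by linarith : g ≠ 0)]
      simp
  · have key : u ^ a = u ^ g * u ^ (a - g) := by
      rw [← Real.rpow_add h]; ring_nf
    rw [key]
    calc u ^ g * u ^ (a-g) * Real.exp (-lam*u) = u ^ g * (u ^ (a-g) * Real.exp (-lam*u)) := by ring
      _ ≤ u ^ g * C0 := by
          apply mul_le_mul_of_nonneg_left (hC u hu) (by positivity)
      _ ≤ max C0 1 * u ^ g := by
          rw [mul_comm]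
          apply mul_le_mul_of_nonneg_right (le_max_left _ _) (by positivity)

noncomputable def auxS (lam r u : ℝ) : ℝ := u ^ r * Real.exp (-lam * u)
noncomputable def auxS1 (lam r u : ℝ) : ℝ :=
  (r * u ^ (r-1) - lam * u ^ r) * Real.exp (-lam * u)
noncomputable def auxS2 (lam r u : ℝ) : ℝ :=
  (r*(r-1) * u ^ (r-2) - 2*lam*r * u^(r-1) + lam^2 * u^r) * Real.exp (-lam*u)

lemma auxE (lam u : ℝ) : HasDerivAt (fun u => Real.exp (-lam * u)) (-lam * Real.exp (-lam * u)) u := by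
  have h := (Real.hasDerivAt_exp (-lam * u)).comp u ((hasDerivAt_id u).const_mul (-lam))
  simpa [Function.comp_def, mul_comm] using h

lemma hasDerivAt_auxS (lam r u : ℝ) (hr : 1 ≤ r) :
    HasDerivAt (auxS lam r) (auxS1 lam r u) u := by
  have h1 : HasDerivAt (fun u : ℝ => u ^ r) (r * u ^ (r-1)) u :=
    Real.hasDerivAt_rpow_const (Or.inr hr)
  have := h1.mul (auxE lam u)
  unfold auxS auxS1
  exact this.congr_deriv (by ring)

lemma hasDerivAt_auxS1 (lam r u : ℝ) (hr : 2 ≤ r) :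
    HasDerivAt (auxS1 lam r) (auxS2 lam r u) u := by
  have h1 : HasDerivAt (fun u : ℝ => u ^ (r-1)) ((r-1) * u ^ (r-2)) u := by
    have := Real.hasDerivAt_rpow_const (x := u) (p := r-1) (Or.inr (by linarith))
    convert this using 2
    ring_nf
  have h2 : HasDerivAt (fun u : ℝ => u ^ r) (r * u ^ (r-1)) u :=
    Real.hasDerivAt_rpow_const (Or.inr (by linarith))
  have hin : HasDerivAt (fun u : ℝ => r * u ^ (r-1) - lam * u ^ r)
      (r * ((r-1) * u ^ (r-2)) - lam * (r * u ^ (r-1))) u :=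
    (h1.const_mul r).sub (h2.const_mul lam)
  have := hin.mul (auxE lam u)
  unfold auxS1 auxS2
  exact this.congr_deriv (by ring)

lemma aux_bounds (m p lam : ℝ) (hm : 2 ≤ m) (hp : m ≤ p) (hlam : 0 < lam) :
    ∃ K : ℝ, 1 ≤ K ∧ ∀ u : ℝ, 0 ≤ u →
      auxS lam p u ≤ K ∧ |auxS1 lam p u| ≤ K * u ^ ((m-2)/2) ∧
        |auxS2 lam p u| ≤ K * u ^ (m-2) := by
  obtain ⟨C0, hC0, h0⟩ := aux_pow_exp_le_rpow p 0 lam le_rfl (by linarith) hlam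
  obtain ⟨Ca, hCa, ha⟩ := aux_pow_exp_le_rpow (p-1) ((m-2)/2) lam (by linarith) (by linarith) hlam
  obtain ⟨Cb, hCb, hb⟩ := aux_pow_exp_le_rpow p ((m-2)/2) lam (by linarith) (by linarith) hlam
  obtain ⟨Cc, hCc, hc⟩ := aux_pow_exp_le_rpow (p-2) (m-2) lam (by linarith) (by linarith) hlam
  obtain ⟨Cd, hCd, hd⟩ := aux_pow_exp_le_rpow (p-1) (m-2) lam (by linarith) (by linarith) hlam
  obtain ⟨Ce, hCe, he⟩ := aux_pow_exp_le_rpow p (m-2) lam (by linarith) (by linarith) hlam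
  have hp0 : (0:ℝ) < p := by linarith
  have t1 : (0:ℝ) ≤ p*Ca := mul_nonneg hp0.le (by linarith)
  have t2 : (0:ℝ) ≤ lam*Cb := mul_nonneg hlam.le (by linarith)
  have t3 : (0:ℝ) ≤ p*(p-1)*Cc := mul_nonneg (mul_nonneg hp0.le (by linarith)) (by linarith)
  have t4 : (0:ℝ) ≤ 2*lam*p*Cd := mul_nonneg (mul_nonneg (by linarith) hp0.le) (by linarith)
  have t5 : (0:ℝ) ≤ lam^2*Ce := mul_nonneg (by positivity) (by linarith)
  refine ⟨C0 + (p*Ca + lam*Cb) + (p*(p-1)*Cc + 2*lam*p*Cd + lam^2*Ce), by linarith, fun u hu => ?_⟩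
  set K := C0 + (p*Ca + lam*Cb) + (p*(p-1)*Cc + 2*lam*p*Cd + lam^2*Ce) with hK
  have e0 := Real.exp_nonneg (-lam*u)
  have r1 : (0:ℝ) ≤ u ^ (p-1) := Real.rpow_nonneg hu _
  have r2 : (0:ℝ) ≤ u ^ p := Real.rpow_nonneg hu _
  have r3 : (0:ℝ) ≤ u ^ (p-2) := Real.rpow_nonneg hu _
  have rg : (0:ℝ) ≤ u ^ ((m-2)/2) := Real.rpow_nonneg hu _
  have rm : (0:ℝ) ≤ u ^ (m-2) := Real.rpow_nonneg hu _
  have h0' := h0 u hu; rw [Real.rpow_zero, mul_one] at h0'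
  have ha' := ha u hu; have hb' := hb u hu
  have hc' := hc u hu; have hd' := hd u hu; have he' := he u hu
  refine ⟨by unfold auxS; linarith, ?_, ?_⟩
  · unfold auxS1
    have habs : |p * u^(p-1) - lam * u^p| ≤ p*u^(p-1) + lam*u^p := by
      have n1 : (0:ℝ) ≤ p*u^(p-1) := mul_nonneg hp0.le r1
      have n2 : (0:ℝ) ≤ lam*u^p := mul_nonneg hlam.le r2
      exact abs_le.mpr ⟨by linarith, by linarith⟩
    calc |(p * u ^ (p-1) - lam * u ^ p) * Real.exp (-lam * u)|
        = |p * u ^ (p-1) - lam * u ^ p| * Real.exp (-lam*u) := by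
          rw [abs_mul, abs_of_nonneg e0]
      _ ≤ (p*u^(p-1) + lam*u^p) * Real.exp (-lam*u) :=
          mul_le_mul_of_nonneg_right habs e0
      _ = p*(u^(p-1)*Real.exp (-lam*u)) + lam*(u^p*Real.exp (-lam*u)) := by ring
      _ ≤ p*(Ca*u^((m-2)/2)) + lam*(Cb*u^((m-2)/2)) :=
          add_le_add (mul_le_mul_of_nonneg_left ha' hp0.le)
            (mul_le_mul_of_nonneg_left hb' hlam.le)
      _ = (p*Ca + lam*Cb) * u^((m-2)/2) := by ring
      _ ≤ K * u^((m-2)/2) := mul_le_mul_of_nonneg_right (by linarith) rg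
  · unfold auxS2
    have n1 : (0:ℝ) ≤ p*(p-1)*u^(p-2) := mul_nonneg (mul_nonneg hp0.le (by linarith)) r3
    have n2 : (0:ℝ) ≤ 2*lam*p*u^(p-1) := mul_nonneg (mul_nonneg (by linarith) hp0.le) r1
    have n3 : (0:ℝ) ≤ lam^2*u^p := mul_nonneg (by positivity) r2
    have habs : |p*(p-1)*u^(p-2) - 2*lam*p*u^(p-1) + lam^2*u^p|
        ≤ p*(p-1)*u^(p-2) + 2*lam*p*u^(p-1) + lam^2*u^p :=
      abs_le.mpr ⟨by linarith, by linarith⟩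
    calc |(p*(p-1) * u ^ (p-2) - 2*lam*p * u^(p-1) + lam^2 * u^p) * Real.exp (-lam*u)|
        = |p*(p-1)*u^(p-2) - 2*lam*p*u^(p-1) + lam^2*u^p| * Real.exp (-lam*u) := by
          rw [abs_mul, abs_of_nonneg e0]
      _ ≤ (p*(p-1)*u^(p-2) + 2*lam*p*u^(p-1) + lam^2*u^p) * Real.exp (-lam*u) :=
          mul_le_mul_of_nonneg_right habs e0
      _ = p*(p-1)*(u^(p-2)*Real.exp (-lam*u)) + 2*lam*p*(u^(p-1)*Real.exp (-lam*u))
            + lam^2*(u^p*Real.exp (-lam*u)) := by ring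
      _ ≤ p*(p-1)*(Cc*u^(m-2)) + 2*lam*p*(Cd*u^(m-2)) + lam^2*(Ce*u^(m-2)) := by
          refine add_le_add (add_le_add ?_ ?_) ?_
          · exact mul_le_mul_of_nonneg_left hc' (mul_nonneg hp0.le (by linarith))
          · exact mul_le_mul_of_nonneg_left hd' (mul_nonneg (by linarith) hp0.le)
          · exact mul_le_mul_of_nonneg_left he' (by positivity)
      _ = (p*(p-1)*Cc + 2*lam*p*Cd + lam^2*Ce) * u^(m-2) := by ring
      _ ≤ K * u^(m-2) := mul_le_mul_of_nonneg_right (by linarith) rm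

lemma hasDerivAt_line (x d t : ℝ) : HasDerivAt (fun t : ℝ => x + t*d) d t := by
  simpa using ((hasDerivAt_id t).mul_const d).const_add x

lemma comp_S (lam r x d t : ℝ) (hr : 1 ≤ r) :
    HasDerivAt (fun t : ℝ => auxS lam r (x + t*d)) (auxS1 lam r (x+t*d) * d) t := by
  simpa [Function.comp_def] using
    (hasDerivAt_auxS lam r (x+t*d) hr).comp t (hasDerivAt_line x d t)

lemma comp_S1 (lam r x d t : ℝ) (hr : 2 ≤ r) :
    HasDerivAt (fun t : ℝ => auxS1 lam r (x + t*d)) (auxS2 lam r (x+t*d) * d) t := by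
  simpa [Function.comp_def] using
    (hasDerivAt_auxS1 lam r (x+t*d) hr).comp t (hasDerivAt_line x d t)

lemma comp_rpow (r x d t : ℝ) (hr : 1 ≤ r) :
    HasDerivAt (fun t : ℝ => (x + t*d) ^ r) (r * (x+t*d) ^ (r-1) * d) t := by
  simpa [Function.comp_def] using
    (Real.hasDerivAt_rpow_const (x := x+t*d) (p := r) (Or.inr hr)).comp t (hasDerivAt_line x d t)

lemma final_aux (m n A B s : ℝ) (hm : 2 ≤ m) (hn : 2 ≤ n)
    (h : -(1/4 * (A^2 + 2*A*B + B^2)) ≤ s) :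
    0 ≤ (m-1)*A^2 + (n-1)*B^2 + s := by
  nlinarith [sq_nonneg (A-B), sq_nonneg A, sq_nonneg B,
    mul_nonneg (by linarith : (0:ℝ) ≤ m-2) (sq_nonneg A),
    mul_nonneg (by linarith : (0:ℝ) ≤ n-2) (sq_nonneg B)]

lemma second_nonneg (m n p q lam c Kp Kq d1 d2 U V : ℝ)
    (hm : 2 ≤ m) (hn : 2 ≤ n) (hc : 0 < c)
    (hKp1 : 1 ≤ Kp) (hKq1 : 1 ≤ Kq)
    (hSpb : auxS lam p U ≤ Kp) (hS1p : |auxS1 lam p U| ≤ Kp * U ^ ((m-2)/2))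
    (hS2p : |auxS2 lam p U| ≤ Kp * U ^ (m-2))
    (hSqb : auxS lam q V ≤ Kq) (hS1q : |auxS1 lam q V| ≤ Kq * V ^ ((n-2)/2))
    (hS2q : |auxS2 lam q V| ≤ Kq * V ^ (n-2))
    (hcM : c * (Kp*Kq) ≤ 1/4)
    (hU : 0 ≤ U) (hV : 0 ≤ V) :
    0 ≤ d1^2*((m-1)*U^(m-2)) + d2^2*((n-1)*V^(n-2)) +
      c*(d1^2*(auxS2 lam p U)*auxS lam q V
        + 2*d1*d2*(auxS1 lam p U)*(auxS1 lam q V)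
        + d2^2*(auxS lam p U)*(auxS2 lam q V)) := by
  have hKp0 : (0:ℝ) ≤ Kp := by linarith
  have hKq0 : (0:ℝ) ≤ Kq := by linarith
  set bX := U ^ ((m-2)/2) with hbX
  set bY := V ^ ((n-2)/2) with hbY
  clear_value bX bY
  have bXnn : 0 ≤ bX := hbX ▸ Real.rpow_nonneg hU _
  have bYnn : 0 ≤ bY := hbY ▸ Real.rpow_nonneg hV _
  have rmU : (0:ℝ) ≤ U ^ (m-2) := Real.rpow_nonneg hU _
  have rnV : (0:ℝ) ≤ V ^ (n-2) := Real.rpow_nonneg hV _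
  have hXsq : bX^2 = U ^ (m-2) := by
    rw [hbX, ← Real.rpow_natCast (U ^ ((m-2)/2)) 2, ← Real.rpow_mul hU]
    norm_num
  have hYsq : bY^2 = V ^ (n-2) := by
    rw [hbY, ← Real.rpow_natCast (V ^ ((n-2)/2)) 2, ← Real.rpow_mul hV]
    norm_num
  have hSpnn : 0 ≤ auxS lam p U := mul_nonneg (Real.rpow_nonneg hU _) (Real.exp_nonneg _)
  have hSqnn : 0 ≤ auxS lam q V := mul_nonneg (Real.rpow_nonneg hV _) (Real.exp_nonneg _)
  have hSp' : |auxS lam p U| ≤ Kp := by rw [abs_of_nonneg hSpnn]; exact hSpb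
  have hSq' : |auxS lam q V| ≤ Kq := by rw [abs_of_nonneg hSqnn]; exact hSqb
  have hKpU : (0:ℝ) ≤ Kp * U ^ (m-2) := mul_nonneg hKp0 rmU
  have hKqV : (0:ℝ) ≤ Kq * V ^ (n-2) := mul_nonneg hKq0 rnV
  -- bound the three coupling terms
  have a1 : |d1^2 * auxS2 lam p U * auxS lam q V| ≤ d1^2 * (Kp * U ^ (m-2)) * Kq := by
    rw [abs_mul, abs_mul, abs_of_nonneg (sq_nonneg d1)]
    exact mul_le_mul (mul_le_mul_of_nonneg_left hS2p (sq_nonneg d1)) hSq'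
      (abs_nonneg _) (mul_nonneg (sq_nonneg d1) hKpU)
  have n2 : (0:ℝ) ≤ 2* |d1| * |d2| := by positivity
  have a2 : |2*d1*d2 * auxS1 lam p U * auxS1 lam q V|
      ≤ 2* |d1| * |d2| * (Kp * bX) * (Kq * bY) := by
    rw [abs_mul, abs_mul, abs_mul, abs_mul, abs_two]
    exact mul_le_mul (mul_le_mul_of_nonneg_left hS1p n2) hS1q (abs_nonneg _)
      (mul_nonneg n2 (mul_nonneg hKp0 bXnn))
  have a3 : |d2^2 * auxS lam p U * auxS2 lam q V| ≤ d2^2 * Kp * (Kq * V ^ (n-2)) := by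
    rw [abs_mul, abs_mul, abs_of_nonneg (sq_nonneg d2)]
    exact mul_le_mul (mul_le_mul_of_nonneg_left hSp' (sq_nonneg d2)) hS2q
      (abs_nonneg _) (mul_nonneg (sq_nonneg d2) hKp0)
  set W := d1^2*(auxS2 lam p U)*auxS lam q V
        + 2*d1*d2*(auxS1 lam p U)*(auxS1 lam q V)
        + d2^2*(auxS lam p U)*(auxS2 lam q V) with hW
  clear_value W
  have habsW : |W| ≤ Kp*Kq * (d1^2 * U^(m-2) + 2* |d1| * |d2| *bX*bY + d2^2*V^(n-2)) := by
    calc |W| = |d1^2 * auxS2 lam p U * auxS lam q V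
          + 2*d1*d2 * auxS1 lam p U * auxS1 lam q V
          + d2^2 * auxS lam p U * auxS2 lam q V| := by rw [hW]
      _ ≤ |d1^2 * auxS2 lam p U * auxS lam q V
          + 2*d1*d2 * auxS1 lam p U * auxS1 lam q V|
          + |d2^2 * auxS lam p U * auxS2 lam q V| := abs_add_le _ _
      _ ≤ |d1^2 * auxS2 lam p U * auxS lam q V|
          + |2*d1*d2 * auxS1 lam p U * auxS1 lam q V|
          + |d2^2 * auxS lam p U * auxS2 lam q V| := by
            have := abs_add_le (d1^2 * auxS2 lam p U * auxS lam q V)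
              (2*d1*d2 * auxS1 lam p U * auxS1 lam q V)
            linarith only [this]
      _ ≤ d1^2 * (Kp * U ^ (m-2)) * Kq + 2* |d1| * |d2| * (Kp * bX) * (Kq * bY)
          + d2^2 * Kp * (Kq * V ^ (n-2)) := by linarith only [a1, a2, a3]
      _ = Kp*Kq * (d1^2 * U^(m-2) + 2* |d1| * |d2| *bX*bY + d2^2*V^(n-2)) := by ring
  have hWlow : -(Kp*Kq * (d1^2 * U^(m-2) + 2* |d1| * |d2| *bX*bY + d2^2*V^(n-2))) ≤ W := by
    have := neg_abs_le W
    linarith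
  have hcW : -(c * (Kp*Kq) * (d1^2 * U^(m-2) + 2* |d1| * |d2| *bX*bY + d2^2*V^(n-2))) ≤ c * W := by
    have := mul_le_mul_of_nonneg_left hWlow hc.le
    calc -(c * (Kp*Kq) * (d1^2 * U^(m-2) + 2* |d1| * |d2| *bX*bY + d2^2*V^(n-2)))
        = c * -(Kp*Kq * (d1^2 * U^(m-2) + 2* |d1| * |d2| *bX*bY + d2^2*V^(n-2))) := by ring
      _ ≤ c * W := this
  have hS : (0:ℝ) ≤ d1^2 * U^(m-2) + 2* |d1| * |d2| *bX*bY + d2^2*V^(n-2) := by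
    have h1 : d1^2 * U^(m-2) = (|d1| *bX)^2 := by rw [mul_pow, sq_abs, hXsq]
    have h2 : d2^2 * V^(n-2) = (|d2| *bY)^2 := by rw [mul_pow, sq_abs, hYsq]
    have h3 := sq_nonneg (|d1| *bX + |d2| *bY)
    nlinarith only [h1, h2, h3]
  have hquarter : -(1/4 * (d1^2 * U^(m-2) + 2* |d1| * |d2| *bX*bY + d2^2*V^(n-2))) ≤ c * W := by
    have h4 := mul_le_mul_of_nonneg_right hcM hS
    linarith only [h4, hcW]
  set A := |d1| * bX with hA
  set B := |d2| * bY with hB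
  have h1 : d1^2 * U^(m-2) = A^2 := by rw [hA, mul_pow, sq_abs, hXsq]
  have h2 : d2^2 * V^(n-2) = B^2 := by rw [hB, mul_pow, sq_abs, hYsq]
  have hS_eq : d1^2 * U^(m-2) + 2 * |d1| * |d2| * bX * bY + d2^2*V^(n-2)
      = A^2 + 2*A*B + B^2 := by rw [h1, h2, hA, hB]; ring
  rw [hS_eq] at hquarter
  have e1 : d1^2*((m-1)*U^(m-2)) = (m-1)*A^2 := by rw [← h1]; ring
  have e2 : d2^2*((n-1)*V^(n-2)) = (n-1)*B^2 := by rw [← h2]; ring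
  rw [e1, e2]
  exact final_aux m n A B (c*W) hm hn hquarter

lemma line_convexOn (m n p q lam c Kp Kq : ℝ)
    (hm : 2 ≤ m) (hn : 2 ≤ n) (hp : m ≤ p) (hq : n ≤ q) (hlam : 0 < lam)
    (hc : 0 < c) (hKp1 : 1 ≤ Kp) (hKq1 : 1 ≤ Kq)
    (hKp : ∀ u : ℝ, 0 ≤ u → auxS lam p u ≤ Kp ∧ |auxS1 lam p u| ≤ Kp * u ^ ((m-2)/2) ∧
        |auxS2 lam p u| ≤ Kp * u ^ (m-2))
    (hKq : ∀ v : ℝ, 0 ≤ v → auxS lam q v ≤ Kq ∧ |auxS1 lam q v| ≤ Kq * v ^ ((n-2)/2) ∧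
        |auxS2 lam q v| ≤ Kq * v ^ (n-2))
    (hcM : c * (Kp*Kq) ≤ 1/4)
    (x1 x2 d1 d2 : ℝ) (hx1 : 0 ≤ x1) (hx2 : 0 ≤ x2)
    (hy1 : 0 ≤ x1 + d1) (hy2 : 0 ≤ x2 + d2) :
    ConvexOn ℝ (Set.Icc (0:ℝ) 1)
      (fun t => (x1+t*d1)^m/m + (x2+t*d2)^n/n
        + c*(auxS lam p (x1+t*d1) * auxS lam q (x2+t*d2))) := by
  have hm0 : m ≠ 0 := by positivity
  have hn0 : n ≠ 0 := by positivity
  set g1 : ℝ → ℝ := fun t => d1*(x1+t*d1)^(m-1) + d2*(x2+t*d2)^(n-1)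
    + c*(auxS1 lam p (x1+t*d1)*d1 * auxS lam q (x2+t*d2)
        + auxS lam p (x1+t*d1) * (auxS1 lam q (x2+t*d2)*d2)) with hg1def
  set g2 : ℝ → ℝ := fun t => d1^2*((m-1)*(x1+t*d1)^(m-2)) + d2^2*((n-1)*(x2+t*d2)^(n-2))
    + c*(d1^2*(auxS2 lam p (x1+t*d1))*auxS lam q (x2+t*d2)
        + 2*d1*d2*(auxS1 lam p (x1+t*d1))*(auxS1 lam q (x2+t*d2))
        + d2^2*(auxS lam p (x1+t*d1))*(auxS2 lam q (x2+t*d2))) with hg2def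
  have Hg : ∀ t : ℝ, HasDerivAt (fun t => (x1+t*d1)^m/m + (x2+t*d2)^n/n
      + c*(auxS lam p (x1+t*d1) * auxS lam q (x2+t*d2))) (g1 t) t := by
    intro t
    have h1 := (comp_rpow m x1 d1 t (by linarith)).div_const m
    have h2 := (comp_rpow n x2 d2 t (by linarith)).div_const n
    have h3 := ((comp_S lam p x1 d1 t (by linarith)).mul
      (comp_S lam q x2 d2 t (by linarith))).const_mul c
    have h4 := (h1.add h2).add h3
    refine h4.congr_deriv ?_
    rw [hg1def]
    field_simp
  have Hg1 : ∀ t : ℝ, HasDerivAt g1 (g2 t) t := by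
    intro t
    have em : m - 1 - 1 = m - 2 := by ring
    have en : n - 1 - 1 = n - 2 := by ring
    have h1 := (comp_rpow (m-1) x1 d1 t (by linarith)).const_mul d1
    rw [em] at h1
    have h2 := (comp_rpow (n-1) x2 d2 t (by linarith)).const_mul d2
    rw [en] at h2
    have hT1 := ((comp_S1 lam p x1 d1 t (by linarith)).mul_const d1).mul
      (comp_S lam q x2 d2 t (by linarith))
    have hT2 := (comp_S lam p x1 d1 t (by linarith)).mul
      ((comp_S1 lam q x2 d2 t (by linarith)).mul_const d2)
    have h4 := (h1.add h2).add ((hT1.add hT2).const_mul c)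
    refine h4.congr_deriv ?_
    rw [hg2def]
    ring
  apply convexOn_of_hasDerivWithinAt2_nonneg (convex_Icc 0 1)
    (fun t _ => (Hg t).continuousAt.continuousWithinAt)
    (fun t _ => (Hg t).hasDerivWithinAt)
    (fun t _ => (Hg1 t).hasDerivWithinAt)
  intro t ht
  rw [interior_Icc] at ht
  have hU : 0 ≤ x1 + t*d1 := by
    nlinarith [mul_nonneg ht.1.le hy1, mul_nonneg (by linarith [ht.2] : (0:ℝ) ≤ 1-t) hx1]
  have hV : 0 ≤ x2 + t*d2 := by
    nlinarith [mul_nonneg ht.1.le hy2, mul_nonneg (by linarith [ht.2] : (0:ℝ) ≤ 1-t) hx2]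
  obtain ⟨hSp, hS1p, hS2p⟩ := hKp _ hU
  obtain ⟨hSq, hS1q, hS2q⟩ := hKq _ hV
  exact second_nonneg m n p q lam c Kp Kq d1 d2 _ _ hm hn hc hKp1 hKq1
    hSp hS1p hS2p hSq hS1q hS2q hcM hU hV

/-- For `F(u) = u^m/m`, `G(v) = v^n/n` with `m, n ≥ 2` and
`h(u,v) = u^p v^q e^{−λ(u+v)}` with `λ > 0`, `p ≥ m`, `q ≥ n`, there exists `ε* > 0`
such that `(u,v) ↦ F(u) + G(v) + 2ε* h(u,v)` is convex on `[0,∞)²`. -/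
theorem exists_eps_convex_coupling
    (m n p q lam : ℝ) (hm : 2 ≤ m) (hn : 2 ≤ n)
    (hp : m ≤ p) (hq : n ≤ q) (hlam : 0 < lam) :
    ∃ εs : ℝ, 0 < εs ∧
      ConvexOn ℝ (Set.Ici (0 : ℝ) ×ˢ Set.Ici (0 : ℝ))
        (fun w : ℝ × ℝ =>
          w.1 ^ m / m + w.2 ^ n / n +
            2 * εs * (w.1 ^ p * w.2 ^ q * Real.exp (-lam * (w.1 + w.2)))) := by
  obtain ⟨Kp, hKp1, hKp⟩ := aux_bounds m p lam hm hp hlam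
  obtain ⟨Kq, hKq1, hKq⟩ := aux_bounds n q lam hn hq hlam
  have hKp0 : (0:ℝ) < Kp := by linarith
  have hKq0 : (0:ℝ) < Kq := by linarith
  refine ⟨1/(8*(Kp*Kq)), by positivity, ?_⟩
  have hc : (0:ℝ) < 2*(1/(8*(Kp*Kq))) := by positivity
  have hcM : (2*(1/(8*(Kp*Kq)))) * (Kp*Kq) ≤ 1/4 := by
    rw [show (2*(1/(8*(Kp*Kq)))) * (Kp*Kq) = (Kp*Kq)/(4*(Kp*Kq)) by ring]
    rw [div_le_iff₀ (by positivity)]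
    ring_nf
    nlinarith
  have heq : (fun w : ℝ × ℝ =>
        w.1 ^ m / m + w.2 ^ n / n +
          2 * (1/(8*(Kp*Kq))) * (w.1 ^ p * w.2 ^ q * Real.exp (-lam * (w.1 + w.2))))
      = fun w : ℝ × ℝ => w.1 ^ m/m + w.2 ^ n/n
          + (2*(1/(8*(Kp*Kq)))) * (auxS lam p w.1 * auxS lam q w.2) := by
    funext w
    unfold auxS
    rw [show -lam * (w.1+w.2) = -lam*w.1 + -lam*w.2 by ring, Real.exp_add]
    ring
  rw [heq]
  refine ⟨(convex_Ici 0).prod (convex_Ici 0), ?_⟩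
  intro x hx y hy a b ha hb hab
  have hx1 : (0:ℝ) ≤ x.1 := Set.mem_Ici.mp hx.1
  have hx2 : (0:ℝ) ≤ x.2 := Set.mem_Ici.mp hx.2
  have hy1 : (0:ℝ) ≤ y.1 := Set.mem_Ici.mp hy.1
  have hy2 : (0:ℝ) ≤ y.2 := Set.mem_Ici.mp hy.2
  have hline := line_convexOn m n p q lam (2*(1/(8*(Kp*Kq)))) Kp Kq hm hn hp hq hlam
    hc hKp1 hKq1 hKp hKq hcM x.1 x.2 (y.1 - x.1) (y.2 - x.2) hx1 hx2
    (by linarith) (by linarith)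
  have h01 : (0:ℝ) ∈ Set.Icc (0:ℝ) 1 := by norm_num
  have h11 : (1:ℝ) ∈ Set.Icc (0:ℝ) 1 := by norm_num
  have key := hline.2 h01 h11 ha hb hab
  simp only [smul_eq_mul, mul_zero, mul_one, zero_mul, one_mul, add_zero, zero_add] at key
  rw [show x.1 + (y.1-x.1) = y.1 from by ring, show x.2 + (y.2-x.2) = y.2 from by ring] at key
  have harg1 : x.1 + b*(y.1-x.1) = a*x.1 + b*y.1 := by linear_combination (-x.1) * hab
  have harg2 : x.2 + b*(y.2-x.2) = a*x.2 + b*y.2 := by linear_combination (-x.2) * hab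
  rw [harg1, harg2] at key
  simp only [smul_eq_mul, Prod.fst_add, Prod.snd_add, Prod.smul_fst, Prod.smul_snd]
  exact key
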